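/- Let ε_1,…,ε_n be iid Rademacher random variables independent of the iid uniform indices ω_1,…,ω_n. Then for every t > 0, P{ ‖X̄ − A‖_{∘,δ} ≥ 3t } ≤ exp( −n t² / (4 d_*^k ‖A‖_max²) ) + exp( −(3/4)·δ_**²·n t / (d_*^k δ_*^k ‖A‖_max) ) + 4·P{ ‖(1/n)·Σ_{i=1}^n ε_i X_i‖_{∘,δ} ≥ t }. -/

import Mathlib

open Finset


open scoped BigOperators

namespace IncoherentTensor

variable {k : ℕ}

/-- A `k`-th order tensor in `ℝ^{d 1 × ⋯ × d k}`. -/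
abbrev Tensor (d : Fin k → ℕ) : Type := (∀ j, Fin (d j)) → ℝ

variable {d : Fin k → ℕ}

/-- Entrywise inner product of tensors. -/
noncomputable def tinner (X Y : Tensor d) : ℝ := ∑ a : ∀ j, Fin (d j), X a * Y a

/-- Hilbert–Schmidt (entrywise ℓ2) norm. -/
noncomputable def hsNorm (X : Tensor d) : ℝ := Real.sqrt (tinner X X)

/-- Largest absolute entry. -/
noncomputable def maxNorm (X : Tensor d) : ℝ := ⨆ a, |X a|

/-- Euclidean norm of a vector. -/
noncomputable def l2 {n : ℕ} (u : Fin n → ℝ) : ℝ := Real.sqrt (∑ i, u i ^ 2)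

/-- Supremum norm of a vector. -/
noncomputable def linf {n : ℕ} (u : Fin n → ℝ) : ℝ := ⨆ i, |u i|

/-- Rank-one tensor `u_1 ⊗ ⋯ ⊗ u_k`. -/
def rankOne (u : ∀ j, Fin (d j) → ℝ) : Tensor d := fun a => ∏ j, u j (a j)

/-- Tensor spectral norm. -/
noncomputable def spectralNorm (X : Tensor d) : ℝ :=
  sSup {r | ∃ u : ∀ j, Fin (d j) → ℝ, (∀ j, l2 (u j) ≤ 1) ∧ r = tinner X (rankOne u)}

/-- Tensor nuclear norm. -/
noncomputable def nuclearNorm (X : Tensor d) : ℝ :=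
  sSup {r | ∃ Y : Tensor d, spectralNorm Y ≤ 1 ∧ r = tinner X Y}

/-- The set `U(δ)` of rank-one tensors satisfying the incoherence constraints in all but
two directions. -/
def Uset (δ : Fin k → ℝ) : Set (Tensor d) :=
  {Y | ∃ j1 j2 : Fin k, j1 < j2 ∧ ∃ u : ∀ j, Fin (d j) → ℝ,
    (∀ j, l2 (u j) ≤ 1) ∧ (∀ j, j ≠ j1 → j ≠ j2 → linf (u j) ≤ δ j) ∧ Y = rankOne u}

/-- Incoherent spectral norm `‖X‖_{∘,δ}`. -/
noncomputable def onorm (δ : Fin k → ℝ) (X : Tensor d) : ℝ :=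
  sSup {r | ∃ Y ∈ Uset (d := d) δ, r = tinner Y X}

/-- Incoherent nuclear norm `‖X‖_{⋆,δ}`. -/
noncomputable def starNorm (δ : Fin k → ℝ) (X : Tensor d) : ℝ :=
  sSup {r | ∃ Y : Tensor d, onorm δ Y ≤ 1 ∧ r = tinner Y X}

/-- The span `L_j(X)` of the mode-`j` fibers of `X`. -/
noncomputable def fiberSpan (X : Tensor d) (j : Fin k) :
    Submodule ℝ (EuclideanSpace ℝ (Fin (d j))) :=
  Submodule.span ℝ {v | ∃ a : ∀ i, Fin (d i), v = fun i => X (Function.update a j i)}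

/-- Tucker rank `r_j(X) = dim L_j(X)`. -/
noncomputable def tuckerRank (X : Tensor d) (j : Fin k) : ℕ :=
  Module.finrank ℝ (fiberSpan X j)

/-- Orthogonal projection `P_j(X)` of `ℝ^{d_j}` onto `L_j(X)`. -/
noncomputable def projMode (X : Tensor d) (j : Fin k) :
    EuclideanSpace ℝ (Fin (d j)) →L[ℝ] EuclideanSpace ℝ (Fin (d j)) :=
  (fiberSpan X j).subtypeL.comp ((fiberSpan X j).orthogonalProjection)

/-- The matrix of `P_j(X)` in the standard basis. -/
noncomputable def Pmat (X : Tensor d) (j : Fin k) : Matrix (Fin (d j)) (Fin (d j)) ℝ :=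
  Matrix.of fun a b => projMode X j (EuclideanSpace.single b 1) a

/-- Action of a Kronecker product `A_1 ⊗ ⋯ ⊗ A_k` of matrices on a tensor. -/
noncomputable def kronApply (A : ∀ j, Matrix (Fin (d j)) (Fin (d j)) ℝ) (W : Tensor d) :
    Tensor d :=
  fun a => ∑ b : ∀ j, Fin (d j), (∏ j, A j (a j) (b j)) * W b

/-- `Q⁰_X = P_1 ⊗ ⋯ ⊗ P_k`. -/
noncomputable def Q0 (X : Tensor d) (W : Tensor d) : Tensor d :=
  kronApply (fun j => Pmat X j) W

/-- `Q_X = Q⁰_X + Σ_j P_1 ⊗ ⋯ ⊗ P_j^⊥ ⊗ ⋯ ⊗ P_k`. -/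
noncomputable def QX (X : Tensor d) (W : Tensor d) : Tensor d :=
  Q0 X W + ∑ j : Fin k, kronApply (fun l => if l = j then 1 - Pmat X l else Pmat X l) W

/-- `Q_X^⊥ = I − Q_X`. -/
noncomputable def Qperp (X : Tensor d) (W : Tensor d) : Tensor d := W - QX X W

/-- Coherence `μ(U)` of a subspace of `ℝ^n`. -/
noncomputable def coherence {n : ℕ} (U : Submodule ℝ (EuclideanSpace ℝ (Fin n))) : ℝ :=
  ((n : ℝ) / (Module.finrank ℝ U : ℝ)) *
    ⨆ i : Fin n, ‖U.orthogonalProjection (EuclideanSpace.single i 1)‖ ^ 2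

/-- Probability of an event on a finite sample space, under the uniform distribution. -/
noncomputable def prob {Ω : Type*} [Fintype Ω] (P : Ω → Prop) : ℝ :=
  (Nat.card {ω : Ω // P ω} : ℝ) / (Fintype.card Ω : ℝ)

/-- `P_ω X` retains the entry `ω` of `X` and zeroes out the rest. -/
noncomputable def Pentry (ω : ∀ j, Fin (d j)) (X : Tensor d) : Tensor d :=
  fun a => if a = ω then X a else 0

/-- `P_Ω X` retains the entries of `X` on `Ω` and zeroes out the rest. -/
noncomputable def POmega (S : Finset (∀ j, Fin (d j))) (X : Tensor d) : Tensor d :=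
  fun a => if a ∈ S then X a else 0

/-- The empirical average `X̄ = (X_1 + ⋯ + X_n)/n` of `X_i = (d_1⋯d_k)·P_{ω_i} A`. -/
noncomputable def sampleAvg (A : Tensor d) (n : ℕ) (s : Fin n → ∀ j, Fin (d j)) : Tensor d :=
  fun a => (1 / (n : ℝ)) * ∑ i : Fin n, (∏ j, (d j : ℝ)) * Pentry (s i) A a

/-- `Y` is `μ`-incoherent. -/
noncomputable def muIncoherent (μ : ℝ) (Y : Tensor d) : Prop :=
  ∀ j, ∀ u : EuclideanSpace ℝ (Fin (d j)), ‖u‖ ≤ 1 →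
    linf (fun i => projMode Y j u i) ≤ Real.sqrt (μ * (tuckerRank Y j : ℝ) / (d j : ℝ))



section Aux
variable {k : ℕ} {d : Fin k → ℕ}

lemma sum_pi_prod (f : ∀ j, Fin (d j) → ℝ) :
    ∑ a : ∀ j, Fin (d j), ∏ j, f j (a j) = ∏ j, ∑ x, f j x := by
  rw [Finset.prod_univ_sum (fun j => (univ : Finset (Fin (d j)))) f, ← Fintype.piFinset_univ]

lemma tinner_sub_right (Y X Z : Tensor d) :
    tinner Y (X - Z) = tinner Y X - tinner Y Z := by
  simp [tinner, mul_sub, Finset.sum_sub_distrib]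

lemma tinner_neg_left (Y X : Tensor d) : tinner (-Y) X = - tinner Y X := by
  simp [tinner, Finset.sum_neg_distrib]

lemma abs_le_l2 {m : ℕ} (u : Fin m → ℝ) (i : Fin m) : |u i| ≤ l2 u := by
  rw [l2, ← Real.sqrt_sq_eq_abs]
  apply Real.sqrt_le_sqrt
  exact Finset.single_le_sum (f := fun i => u i ^ 2) (fun j _ => sq_nonneg _) (mem_univ i)

lemma abs_le_linf {m : ℕ} (u : Fin m → ℝ) (i : Fin m) : |u i| ≤ linf u :=
  le_ciSup (f := fun i => |u i|) (Set.Finite.bddAbove (Set.finite_range _)) i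

-- facts about members of Uset
lemma Uset.abs_le_one {δ : Fin k → ℝ} {Y : Tensor d} (hY : Y ∈ Uset δ) (a : ∀ j, Fin (d j)) :
    |Y a| ≤ 1 := by
  obtain ⟨j1, j2, hj, u, hu2, hui, rfl⟩ := hY
  rw [rankOne, Finset.abs_prod]
  apply Finset.prod_le_one (fun j _ => abs_nonneg _)
  intro j _
  exact (abs_le_l2 (u j) (a j)).trans (hu2 j)

lemma Uset.sq_sum_le_one {δ : Fin k → ℝ} {Y : Tensor d} (hY : Y ∈ Uset δ) :
    ∑ a : ∀ j, Fin (d j), Y a ^ 2 ≤ 1 := by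
  obtain ⟨j1, j2, hj, u, hu2, hui, rfl⟩ := hY
  have : ∀ a : ∀ j, Fin (d j), (rankOne u) a ^ 2 = ∏ j, (u j (a j)) ^ 2 := by
    intro a; rw [rankOne, ← Finset.prod_pow]
  rw [Finset.sum_congr rfl fun a _ => this a, sum_pi_prod (fun j x => u j x ^ 2)]
  apply Finset.prod_le_one
  · intro j _; positivity
  · intro j _
    have h1 : Real.sqrt (∑ x, u j x ^ 2) ≤ 1 := hu2 j
    have h2 : 0 ≤ ∑ x, u j x ^ 2 := Finset.sum_nonneg fun x _ => sq_nonneg _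
    nlinarith [Real.sq_sqrt h2, Real.sqrt_nonneg (∑ x, u j x ^ 2)]

lemma Uset.abs_le_prod {δ : Fin k → ℝ} (hδ : ∀ j, δ j ∈ Set.Ioc (0:ℝ) 1)
    {Y : Tensor d} (hY : Y ∈ Uset δ) :
    ∃ j1 j2 : Fin k, j1 ≠ j2 ∧ ∀ a : ∀ j, Fin (d j),
      |Y a| * (δ j1 * δ j2) ≤ ∏ j, δ j := by
  obtain ⟨j1, j2, hj, u, hu2, hui, rfl⟩ := hY
  refine ⟨j1, j2, hj.ne, fun a => ?_⟩
  have hsplit : δ j1 * δ j2 * ∏ j ∈ ({j1, j2} : Finset (Fin k))ᶜ, δ j = ∏ j, δ j := by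
    rw [← Finset.prod_pair hj.ne]
    exact Finset.prod_mul_prod_compl _ _
  have hYb : |rankOne u a| ≤ ∏ j ∈ ({j1, j2} : Finset (Fin k))ᶜ, δ j := by
    rw [rankOne, Finset.abs_prod]
    rw [← Finset.prod_mul_prod_compl ({j1, j2} : Finset (Fin k)) (fun j => |u j (a j)|)]
    have h1 : ∏ j ∈ ({j1, j2} : Finset (Fin k)), |u j (a j)| ≤ 1 :=
      Finset.prod_le_one (fun j _ => abs_nonneg _)
        (fun j _ => (abs_le_l2 (u j) (a j)).trans (hu2 j))
    have h2 : ∏ j ∈ ({j1, j2} : Finset (Fin k))ᶜ, |u j (a j)|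
        ≤ ∏ j ∈ ({j1, j2} : Finset (Fin k))ᶜ, δ j := by
      apply Finset.prod_le_prod (fun j _ => abs_nonneg _)
      intro j hjmem
      rw [Finset.mem_compl, Finset.mem_insert, Finset.mem_singleton] at hjmem
      push_neg at hjmem
      exact (abs_le_linf (u j) (a j)).trans (hui j hjmem.1 hjmem.2)
    have h3 : (0:ℝ) ≤ ∏ j ∈ ({j1, j2} : Finset (Fin k))ᶜ, |u j (a j)| :=
      Finset.prod_nonneg fun j _ => abs_nonneg _
    calc (∏ j ∈ ({j1, j2} : Finset (Fin k)), |u j (a j)|) *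
          ∏ j ∈ ({j1, j2} : Finset (Fin k))ᶜ, |u j (a j)|
        ≤ 1 * ∏ j ∈ ({j1, j2} : Finset (Fin k))ᶜ, δ j := by
          apply mul_le_mul h1 h2 h3 one_pos.le
      _ = _ := one_mul _
  calc |rankOne u a| * (δ j1 * δ j2)
      ≤ (∏ j ∈ ({j1, j2} : Finset (Fin k))ᶜ, δ j) * (δ j1 * δ j2) := by
        apply mul_le_mul_of_nonneg_right hYb
        exact mul_nonneg (hδ j1).1.le (hδ j2).1.le
    _ = ∏ j, δ j := by rw [← hsplit]; ring


lemma Uset.zero_mem (hk : 2 ≤ k) {δ : Fin k → ℝ} (hδ : ∀ j, δ j ∈ Set.Ioc (0:ℝ) 1) :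
    (0 : Tensor d) ∈ Uset δ := by
  have hk0 : 0 < k := by omega
  refine ⟨⟨0, by omega⟩, ⟨1, by omega⟩, by simp [Fin.mk_lt_mk], fun _ _ => 0, ?_, ?_, ?_⟩
  · intro j; simp [l2]
  · intro j _ _
    have : linf (fun _ : Fin (d j) => (0:ℝ)) = ⨆ _ : Fin (d j), (0:ℝ) := by
      simp [linf]
    rw [this]
    rcases isEmpty_or_nonempty (Fin (d j)) with h | h
    · rw [Real.iSup_of_isEmpty]; exact (hδ j).1.le
    · rw [ciSup_const]; exact (hδ j).1.le
  · funext a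
    simp only [Pi.zero_apply, rankOne]
    rw [Finset.prod_const, Finset.card_univ, Fintype.card_fin]
    exact (zero_pow (by omega)).symm

lemma Uset.neg_mem {δ : Fin k → ℝ} {Y : Tensor d} (hY : Y ∈ Uset δ) : -Y ∈ Uset δ := by
  obtain ⟨j1, j2, hj, u, hu2, hui, rfl⟩ := hY
  refine ⟨j1, j2, hj, Function.update u j1 (-(u j1)), ?_, ?_, ?_⟩
  · intro j
    rcases eq_or_ne j j1 with rfl | h
    · simpa [l2, Function.update_self] using hu2 j
    · rw [Function.update_of_ne h]; exact hu2 j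
  · intro j h1 h2
    rw [Function.update_of_ne h1]; exact hui j h1 h2
  · funext a
    simp only [Pi.neg_apply, rankOne]
    rw [← Finset.mul_prod_erase univ _ (Finset.mem_univ j1),
        ← Finset.mul_prod_erase univ (fun j => Function.update u j1 (-(u j1)) j (a j))
          (Finset.mem_univ j1)]
    rw [Function.update_self]
    have : ∀ j ∈ univ.erase j1,
        Function.update u j1 (-(u j1)) j (a j) = u j (a j) := by
      intro j hjm
      rw [Function.update_of_ne (Finset.ne_of_mem_erase hjm)]
    rw [Finset.prod_congr rfl this]
    simp

section Onorm
variable (hk : 2 ≤ k) {δ : Fin k → ℝ} (hδ : ∀ j, δ j ∈ Set.Ioc (0:ℝ) 1)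
include hk hδ

lemma onormSet_nonempty (X : Tensor d) :
    (0:ℝ) ∈ {r | ∃ Y ∈ Uset (d := d) δ, r = tinner Y X} := by
  refine ⟨0, Uset.zero_mem hk hδ, ?_⟩
  simp [tinner]

lemma onormSet_bddAbove (X : Tensor d) :
    BddAbove {r | ∃ Y ∈ Uset (d := d) δ, r = tinner Y X} := by
  refine ⟨∑ a, |X a|, ?_⟩
  rintro r ⟨Y, hY, rfl⟩
  calc tinner Y X ≤ |tinner Y X| := le_abs_self _
    _ ≤ ∑ a, |Y a * X a| := Finset.abs_sum_le_sum_abs _ _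
    _ ≤ ∑ a, |X a| := by
        apply Finset.sum_le_sum
        intro a _
        rw [abs_mul]
        calc |Y a| * |X a| ≤ 1 * |X a| :=
              mul_le_mul_of_nonneg_right (Uset.abs_le_one hY a) (abs_nonneg _)
          _ = |X a| := one_mul _

lemma le_onorm {X : Tensor d} {Y : Tensor d} (hY : Y ∈ Uset δ) :
    tinner Y X ≤ onorm δ X :=
  le_csSup (onormSet_bddAbove hk hδ X) ⟨Y, hY, rfl⟩

lemma onorm_nonneg (X : Tensor d) : 0 ≤ onorm δ X :=
  le_csSup (onormSet_bddAbove hk hδ X) (onormSet_nonempty hk hδ X)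

lemma exists_gt_of_lt_onorm {X : Tensor d} {r : ℝ} (h : r < onorm δ X) :
    ∃ Y ∈ Uset (d := d) δ, r < tinner Y X := by
  obtain ⟨x, hx, hrx⟩ := exists_lt_of_lt_csSup ⟨0, onormSet_nonempty hk hδ X⟩ h
  obtain ⟨Y, hY, rfl⟩ := hx
  exact ⟨Y, hY, hrx⟩

lemma onorm_sub_le (X Z : Tensor d) :
    onorm δ (X - Z) ≤ onorm δ X + onorm δ Z := by
  apply csSup_le ⟨0, onormSet_nonempty hk hδ _⟩
  rintro r ⟨Y, hY, rfl⟩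
  have h1 : tinner Y (X - Z) = tinner Y X + tinner (-Y) Z := by
    rw [tinner_sub_right, tinner_neg_left]; ring
  rw [h1]
  exact add_le_add (le_onorm hk hδ hY) (le_onorm hk hδ (Uset.neg_mem hY))

end Onorm
end Aux

section Count
open Finset
variable {α β : Type*} [Fintype α] [Fintype β]

lemma prob_eq_card {Ω : Type*} [Fintype Ω] (P : Ω → Prop) [DecidablePred P] :
    prob P = (((univ : Finset Ω).filter P).card : ℝ) / Fintype.card Ω := by
  rw [prob, Nat.card_eq_fintype_card, Fintype.card_subtype]

lemma card_filter_cast_real {Ω : Type*} [Fintype Ω] (P : Ω → Prop) [DecidablePred P] :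
    (((univ : Finset Ω).filter P).card : ℝ) = ∑ w : Ω, if P w then (1:ℝ) else 0 := by
  rw [Finset.card_filter]
  push_cast
  rfl

lemma count_fst (P : α → Prop) [DecidablePred P] :
    (((univ : Finset (α × β)).filter fun w => P w.1).card : ℝ)
      = (((univ : Finset α).filter P).card : ℝ) * Fintype.card β := by
  rw [card_filter_cast_real, card_filter_cast_real, Fintype.sum_prod_type]
  rw [Finset.sum_mul]
  apply Finset.sum_congr rfl
  intro a _
  by_cases h : P a <;> simp [h, Finset.card_univ]

lemma count_pair_sum (P : α → Prop) (Q : α → β → Prop) [DecidablePred P]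
    [∀ a, DecidablePred (Q a)] :
    (((univ : Finset (α × β)).filter fun w => P w.1 ∧ Q w.1 w.2).card : ℝ)
      = ∑ a ∈ (univ : Finset α).filter P, (((univ : Finset β).filter (Q a)).card : ℝ) := by
  rw [card_filter_cast_real, Fintype.sum_prod_type, Finset.sum_filter]
  apply Finset.sum_congr rfl
  intro a _
  by_cases h : P a
  · simp only [h, if_true, true_and, card_filter_cast_real]
  · simp [h]

lemma count_snd_pred (S : β → Prop) [DecidablePred S] :
    (((univ : Finset (α × β)).filter fun w => S w.2).card : ℝ)
      = (Fintype.card α : ℝ) * ((univ : Finset β).filter S).card := by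
  rw [card_filter_cast_real, card_filter_cast_real, Fintype.sum_prod_type, Finset.sum_comm]
  rw [Finset.mul_sum]
  apply Finset.sum_congr rfl
  intro b _
  by_cases h : S b <;> simp [h, Finset.card_univ]

end Count


section Dss
variable {k : ℕ}

lemma dss_facts (hk : 2 ≤ k) {δ : Fin k → ℝ} (hδ : ∀ j, δ j ∈ Set.Ioc (0:ℝ) 1)
    (δss : ℝ) (hδss : δss = sInf {x | ∃ j1 j2 : Fin k, j1 < j2 ∧ x = Real.sqrt (δ j1 * δ j2)}) :
    0 < δss ∧ ∀ j1 j2 : Fin k, j1 ≠ j2 → δss ^ 2 ≤ δ j1 * δ j2 := by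
  set S : Set ℝ := {x | ∃ j1 j2 : Fin k, j1 < j2 ∧ x = Real.sqrt (δ j1 * δ j2)} with hS
  have hfin : S.Finite := by
    apply Set.Finite.subset (Set.finite_range
      (fun p : Fin k × Fin k => Real.sqrt (δ p.1 * δ p.2)))
    rintro x ⟨j1, j2, _, rfl⟩
    exact ⟨(j1, j2), rfl⟩
  have hne : S.Nonempty := by
    refine ⟨Real.sqrt (δ ⟨0, by omega⟩ * δ ⟨1, by omega⟩), ⟨0, by omega⟩, ⟨1, by omega⟩,
      by simp [Fin.mk_lt_mk], rfl⟩
  have hbdd : BddBelow S := hfin.bddBelow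
  have hmem : sInf S ∈ S := hne.csInf_mem hfin
  have hpos : 0 < δss := by
    rw [hδss]
    obtain ⟨j1, j2, _, heq⟩ := hmem
    rw [heq]
    exact Real.sqrt_pos.mpr (mul_pos (hδ j1).1 (hδ j2).1)
  refine ⟨hpos, fun j1 j2 hne12 => ?_⟩
  have hle : δss ≤ Real.sqrt (δ j1 * δ j2) := by
    rcases lt_or_gt_of_ne hne12 with h | h
    · exact hδss ▸ csInf_le hbdd ⟨j1, j2, h, rfl⟩
    · rw [mul_comm]
      exact hδss ▸ csInf_le hbdd ⟨j2, j1, h, rfl⟩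
  calc δss ^ 2 ≤ Real.sqrt (δ j1 * δ j2) ^ 2 :=
        pow_le_pow_left₀ hpos.le hle 2
    _ = δ j1 * δ j2 := Real.sq_sqrt (mul_nonneg (hδ j1).1.le (hδ j2).1.le)

end Dss

section MaxN
variable {k : ℕ} {d : Fin k → ℕ}

lemma abs_le_maxNorm (hd : ∀ j, 0 < d j) (A : Tensor d) (a : ∀ j, Fin (d j)) :
    |A a| ≤ maxNorm A := by
  have : Nonempty (∀ j, Fin (d j)) := ⟨fun j => ⟨0, hd j⟩⟩
  exact le_ciSup (f := fun a => |A a|) (Set.Finite.bddAbove (Set.finite_range _)) a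

lemma maxNorm_nonneg (hd : ∀ j, 0 < d j) (A : Tensor d) : 0 ≤ maxNorm A :=
  (abs_nonneg _).trans (abs_le_maxNorm hd A (fun j => ⟨0, hd j⟩))

end MaxN

section Bern
open Finset
lemma exp_le_one_add_add_sq {x : ℝ} (hx : x ≤ 3/2) : Real.exp x ≤ 1 + x + x^2 := by
  rcases le_or_gt x 0 with h0 | h0
  · have hmul : Real.exp x * Real.exp (-x) = 1 := by
      rw [← Real.exp_add]; simp
    have h2 := mul_le_mul_of_nonneg_left (Real.add_one_le_exp (-x)) (Real.exp_pos x).le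
    rw [hmul] at h2
    nlinarith [Real.exp_pos x]
  rcases le_or_gt x 1 with h1 | h1
  · have hb := Real.exp_bound (x := x) (by rw [abs_of_nonneg h0.le]; exact h1) (n := 3) (by norm_num)
    rw [abs_of_nonneg h0.le] at hb
    have h2 := (abs_sub_le_iff.mp hb).1
    simp [Finset.sum_range_succ, Nat.factorial] at h2
    nlinarith [pow_le_pow_left₀ h0.le h1 3, sq_nonneg x, h2]
  · have h2 : |x/2| ≤ 1 := by rw [abs_of_nonneg (by linarith)]; linarith
    have hb := Real.exp_bound h2 (n := 2) (by norm_num)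
    have hb' : Real.exp (x/2) ≤ 1 + x/2 + (3/4) * (x/2)^2 := by
      have h3 := (abs_sub_le_iff.mp hb).1
      have hxabs : |x/2| = x/2 := abs_of_nonneg (by linarith)
      simp [Finset.sum_range_succ, Nat.factorial, hxabs] at h3
      nlinarith [h3]
    have hsq : Real.exp x = Real.exp (x/2) * Real.exp (x/2) := by
      rw [← Real.exp_add]; ring_nf
    have hpos : (0:ℝ) ≤ 1 + x/2 + (3/4)*(x/2)^2 := by nlinarith
    calc Real.exp x ≤ (1 + x/2 + (3/4)*(x/2)^2)^2 := by
          rw [hsq, sq]; exact mul_le_mul hb' hb' (Real.exp_pos _).le hpos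
      _ ≤ 1 + x + x^2 := by nlinarith [mul_nonneg (mul_nonneg h0.le h0.le) (sub_nonneg.2 hx), mul_nonneg h0.le (sub_nonneg.2 hx), sq_nonneg x]

lemma sum_fun_prod {I : Type*} [Fintype I] (n : ℕ) (g : I → ℝ) :
    ∑ s : Fin n → I, ∏ i, g (s i) = (∑ ω, g ω) ^ n := by
  rw [Finset.sum_pow' univ g n, ← Fintype.piFinset_univ]



lemma bernstein_count {I : Type*} [Fintype I] [Nonempty I] (n : ℕ) (hn : 0 < n)
    (Z : I → ℝ) (M v t : ℝ) (hM0 : 0 < M) (hv0 : 0 < v) (ht : 0 < t)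
    (hM : ∀ ω, |Z ω| ≤ M) (hv : (∑ ω, Z ω ^ 2) ≤ v * Fintype.card I) :
    (((univ : Finset (Fin n → I)).filter fun s =>
        (∑ i, Z (s i)) ≥ n * (t + (∑ ω, Z ω) / Fintype.card I)).card : ℝ) ≤
      (Fintype.card I : ℝ) ^ n *
        (Real.exp (-(n * t ^ 2) / (4 * v)) + Real.exp (-(3 * n * t) / (4 * M))) := by
  classical
  set D : ℝ := (Fintype.card I : ℝ) with hD
  have hD0 : 0 < D := by positivity
  set μ : ℝ := (∑ ω, Z ω) / D with hμ
  set l : ℝ := min (t / (2 * v)) (3 / (2 * M)) with hl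
  have hl0 : 0 < l := lt_min (by positivity) (by positivity)
  have h32 : 3 / (2*M) * M = 3/2 := by field_simp
  have hlM : l * M ≤ 3 / 2 := by
    have h := min_le_right (t / (2 * v)) (3 / (2 * M))
    have := mul_le_mul_of_nonneg_right h hM0.le
    rw [h32] at this; exact this
  have key : ∑ ω, Real.exp (l * (Z ω - μ)) ≤ D * Real.exp (l ^ 2 * v) := by
    have hpt : ∀ ω, Real.exp (l * Z ω) ≤ 1 + l * Z ω + (l * Z ω) ^ 2 := by
      intro ω
      apply exp_le_one_add_add_sq
      have := (abs_le.mp (hM ω)).2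
      nlinarith [hM0.le, hl0.le]
    have hsum : ∑ ω, Real.exp (l * Z ω) ≤ D * (1 + l * μ + l ^ 2 * v) := by
      calc ∑ ω, Real.exp (l * Z ω) ≤ ∑ ω, (1 + l * Z ω + (l * Z ω) ^ 2) :=
            Finset.sum_le_sum fun ω _ => hpt ω
        _ = D + l * (∑ ω, Z ω) + l ^ 2 * ∑ ω, Z ω ^ 2 := by
            rw [Finset.sum_add_distrib, Finset.sum_add_distrib, Finset.sum_const,
              ← Finset.mul_sum]
            simp only [mul_pow, ← Finset.mul_sum, nsmul_eq_mul, mul_one, Finset.card_univ]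
            rw [hD]
        _ ≤ D + l * (D * μ) + l ^ 2 * (v * D) := by
            have h1 : l * (∑ ω, Z ω) = l * (D * μ) := by
              rw [hμ]; field_simp
            rw [h1]
            have := mul_le_mul_of_nonneg_left hv (sq_nonneg l)
            rw [hD] at this ⊢
            linarith
        _ = D * (1 + l * μ + l ^ 2 * v) := by ring
    have hexp : ∀ ω, Real.exp (l * (Z ω - μ)) = Real.exp (-(l * μ)) * Real.exp (l * Z ω) := by
      intro ω; rw [← Real.exp_add]; ring_nf
    calc ∑ ω, Real.exp (l * (Z ω - μ))
        = Real.exp (-(l * μ)) * ∑ ω, Real.exp (l * Z ω) := by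
          simp only [hexp]; rw [Finset.mul_sum]
      _ ≤ Real.exp (-(l * μ)) * (D * (1 + l * μ + l ^ 2 * v)) :=
          mul_le_mul_of_nonneg_left hsum (Real.exp_pos _).le
      _ ≤ Real.exp (-(l * μ)) * (D * Real.exp (l * μ + l ^ 2 * v)) := by
          have h1 : 1 + l * μ + l ^ 2 * v ≤ Real.exp (l * μ + l ^ 2 * v) := by
            linarith [Real.add_one_le_exp (l * μ + l ^ 2 * v)]
          exact mul_le_mul_of_nonneg_left
            (mul_le_mul_of_nonneg_left h1 hD0.le) (Real.exp_pos _).le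
      _ = D * Real.exp (l ^ 2 * v) := by
          rw [mul_comm (Real.exp _), mul_assoc, ← Real.exp_add]; ring_nf
  -- Chernoff
  have chern : (((univ : Finset (Fin n → I)).filter fun s =>
        (∑ i, Z (s i)) ≥ n * (t + μ)).card : ℝ)
      ≤ D ^ n * Real.exp (n * (-(l * t) + l ^ 2 * v)) := by
    have step1 : (((univ : Finset (Fin n → I)).filter fun s =>
          (∑ i, Z (s i)) ≥ n * (t + μ)).card : ℝ)
        ≤ ∑ s : Fin n → I, Real.exp (l * ((∑ i, Z (s i)) - n * (t + μ))) := by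
      have hcard : (((univ : Finset (Fin n → I)).filter fun s =>
            (∑ i, Z (s i)) ≥ n * (t + μ)).card : ℝ)
          = ∑ _s ∈ (univ : Finset (Fin n → I)).filter
              (fun s => (∑ i, Z (s i)) ≥ n * (t + μ)), (1:ℝ) := by
        rw [Finset.sum_const, nsmul_eq_mul, mul_one]
      rw [hcard]
      calc ∑ _s ∈ (univ : Finset (Fin n → I)).filter
              (fun s => (∑ i, Z (s i)) ≥ n * (t + μ)), (1:ℝ)
          ≤ ∑ s ∈ (univ : Finset (Fin n → I)).filter
              (fun s => (∑ i, Z (s i)) ≥ n * (t + μ)),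
              Real.exp (l * ((∑ i, Z (s i)) - n * (t + μ))) := by
            apply Finset.sum_le_sum
            intro s hs
            rw [Finset.mem_filter] at hs
            have h2 : 0 ≤ l * ((∑ i, Z (s i)) - n * (t + μ)) := by
              have h3 : 0 ≤ (∑ i, Z (s i)) - n * (t + μ) := by linarith [hs.2]
              positivity
            calc (1:ℝ) = Real.exp 0 := by simp
              _ ≤ _ := Real.exp_le_exp.mpr h2
        _ ≤ ∑ s : Fin n → I, Real.exp (l * ((∑ i, Z (s i)) - n * (t + μ))) :=
            Finset.sum_le_sum_of_subset_of_nonneg (Finset.filter_subset _ _)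
              (fun s _ _ => (Real.exp_pos _).le)
    have step2 : ∑ s : Fin n → I, Real.exp (l * ((∑ i, Z (s i)) - n * (t + μ)))
        = Real.exp (-(l * (n * t))) * (∑ ω, Real.exp (l * (Z ω - μ))) ^ n := by
      rw [← sum_fun_prod n (fun ω => Real.exp (l * (Z ω - μ))), Finset.mul_sum]
      apply Finset.sum_congr rfl
      intro s _
      rw [← Real.exp_sum, ← Real.exp_add]
      congr 1
      rw [← Finset.mul_sum, Finset.sum_sub_distrib, Finset.sum_const, Finset.card_univ,
        Fintype.card_fin, nsmul_eq_mul]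
      ring
    calc (((univ : Finset (Fin n → I)).filter fun s =>
          (∑ i, Z (s i)) ≥ n * (t + μ)).card : ℝ)
        ≤ Real.exp (-(l * (n * t))) * (∑ ω, Real.exp (l * (Z ω - μ))) ^ n := by
          rw [← step2]; exact step1
      _ ≤ Real.exp (-(l * (n * t))) * (D * Real.exp (l ^ 2 * v)) ^ n := by
          apply mul_le_mul_of_nonneg_left _ (Real.exp_pos _).le
          exact pow_le_pow_left₀ (Finset.sum_nonneg fun ω _ => (Real.exp_pos _).le) key n
      _ = D ^ n * Real.exp (n * (-(l * t) + l ^ 2 * v)) := by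
          rw [mul_pow, ← Real.exp_nat_mul, mul_comm (Real.exp _), mul_assoc, ← Real.exp_add]
          congr 1
          ring
    -- done
  -- case analysis on the minimum
  have hfinal : Real.exp (n * (-(l * t) + l ^ 2 * v))
      ≤ Real.exp (-(n * t ^ 2) / (4 * v)) + Real.exp (-(3 * n * t) / (4 * M)) := by
    rcases le_or_gt (t / (2 * v)) (3 / (2 * M)) with hc | hc
    · have hleq : l = t / (2 * v) := min_eq_left hc
      have : n * (-(l * t) + l ^ 2 * v) = -(n * t ^ 2) / (4 * v) := by
        rw [hleq]; field_simp; ring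
      rw [this]
      linarith [(Real.exp_pos (-(3 * n * t) / (4 * M))).le]
    · have hleq : l = 3 / (2 * M) := min_eq_right hc.le
      have hvlt : v < t * M / 3 := by
        rw [div_lt_div_iff₀ (by positivity) (by positivity)] at hc
        nlinarith
      have harg : n * (-(l * t) + l ^ 2 * v) ≤ -(3 * n * t) / (4 * M) := by
        rw [hleq]
        have h1 : -(3 / (2 * M) * t) + (3 / (2 * M)) ^ 2 * v
            ≤ -(3 * t) / (4 * M) := by
          have h2 : (3 / (2 * M)) ^ 2 * v ≤ (3 / (2 * M)) ^ 2 * (t * M / 3) :=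
            mul_le_mul_of_nonneg_left hvlt.le (by positivity)
          have h3 : (3 / (2 * M)) ^ 2 * (t * M / 3) = 3 * t / (4 * M) := by
            field_simp; ring
          have h4 : -(3 / (2 * M) * t) + 3 * t / (4 * M) = -(3 * t) / (4 * M) := by
            field_simp; ring
          linarith
        have := mul_le_mul_of_nonneg_left h1 (Nat.cast_nonneg n : (0:ℝ) ≤ n)
        calc (n:ℝ) * (-(3 / (2 * M) * t) + (3 / (2 * M)) ^ 2 * v)
            ≤ n * (-(3 * t) / (4 * M)) := this
          _ = -(3 * n * t) / (4 * M) := by ring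
      calc Real.exp (n * (-(l * t) + l ^ 2 * v))
          ≤ Real.exp (-(3 * n * t) / (4 * M)) := Real.exp_le_exp.mpr harg
        _ ≤ _ := by linarith [(Real.exp_pos (-(n * t ^ 2) / (4 * v))).le]
  calc (((univ : Finset (Fin n → I)).filter fun s =>
        (∑ i, Z (s i)) ≥ n * (t + μ)).card : ℝ)
      ≤ D ^ n * Real.exp (n * (-(l * t) + l ^ 2 * v)) := chern
    _ ≤ D ^ n * (Real.exp (-(n * t ^ 2) / (4 * v)) + Real.exp (-(3 * n * t) / (4 * M))) :=
        mul_le_mul_of_nonneg_left hfinal (by positivity)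

end Bern

section BernApp
open Finset
variable {k : ℕ} {d : Fin k → ℕ}

lemma bernstein_applied (hk : 2 ≤ k) (hd : ∀ j, 0 < d j)
    {δ : Fin k → ℝ} (hδ : ∀ j, δ j ∈ Set.Ioc (0:ℝ) 1)
    (A : Tensor d) (n : ℕ) (hn : 0 < n) (t : ℝ) (ht : 0 < t)
    (hA : 0 < maxNorm A) (δss : ℝ)
    (hδss : δss = sInf {x | ∃ j1 j2 : Fin k, j1 < j2 ∧ x = Real.sqrt (δ j1 * δ j2)})
    {Y : Tensor d} (hY : Y ∈ Uset δ) :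
    (((univ : Finset (Fin n → ∀ j, Fin (d j))).filter fun s =>
        tinner Y (sampleAvg A n s - A) ≥ t).card : ℝ)
      ≤ (∏ j, (d j : ℝ)) ^ n *
        (Real.exp (-(n * t ^ 2) / (4 * ((∏ j, (d j : ℝ)) * maxNorm A ^ 2)))
          + Real.exp (-(3 * n * t) /
              (4 * ((∏ j, (d j : ℝ)) * (∏ j, δ j) * maxNorm A / δss ^ 2)))) := by
  classical
  have hI : Nonempty (∀ j, Fin (d j)) := ⟨fun j => ⟨0, hd j⟩⟩
  set DD : ℝ := ∏ j, (d j : ℝ) with hDD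
  have hDD0 : 0 < DD := Finset.prod_pos fun j _ => by exact_mod_cast hd j
  have hcard : (Fintype.card (∀ j, Fin (d j)) : ℝ) = DD := by
    rw [Fintype.card_pi]
    push_cast
    simp
    rw [hDD]
  obtain ⟨hsspos, hss2⟩ := dss_facts hk hδ δss hδss
  have hδprod : 0 < ∏ j, δ j := Finset.prod_pos fun j _ => (hδ j).1
  set Z : (∀ j, Fin (d j)) → ℝ := fun ω => DD * (Y ω * A ω) with hZ
  set M : ℝ := DD * (∏ j, δ j) * maxNorm A / δss ^ 2 with hM
  set v : ℝ := DD * maxNorm A ^ 2 with hv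
  have hM0 : 0 < M := by rw [hM]; positivity
  have hv0 : 0 < v := by rw [hv]; positivity
  have hMb : ∀ ω, |Z ω| ≤ M := by
    intro ω
    obtain ⟨j1, j2, hne12, hb⟩ := Uset.abs_le_prod hδ hY
    have h1 : |Y ω| * δss ^ 2 ≤ ∏ j, δ j := by
      calc |Y ω| * δss ^ 2 ≤ |Y ω| * (δ j1 * δ j2) :=
            mul_le_mul_of_nonneg_left (hss2 j1 j2 hne12) (abs_nonneg _)
        _ ≤ ∏ j, δ j := hb ω
    have h2 : |Z ω| * δss ^ 2 ≤ DD * (∏ j, δ j) * maxNorm A := by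
      have : |Z ω| = DD * (|Y ω| * |A ω|) := by
        rw [hZ]; simp [abs_mul, abs_of_pos hDD0]
      rw [this]
      calc DD * (|Y ω| * |A ω|) * δss ^ 2 = DD * ((|Y ω| * δss ^ 2) * |A ω|) := by ring
        _ ≤ DD * ((∏ j, δ j) * maxNorm A) := by
            apply mul_le_mul_of_nonneg_left _ hDD0.le
            exact mul_le_mul h1 (abs_le_maxNorm hd A ω) (abs_nonneg _) hδprod.le
        _ = DD * (∏ j, δ j) * maxNorm A := by ring
    rw [hM, le_div_iff₀ (by positivity)]
    exact h2
  have hvb : (∑ ω, Z ω ^ 2) ≤ v * Fintype.card (∀ j, Fin (d j)) := by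
    rw [hcard]
    have h1 : ∀ ω, Z ω ^ 2 = DD ^ 2 * (A ω ^ 2 * Y ω ^ 2) := by
      intro ω; rw [hZ]; ring
    have h2 : ∀ ω, A ω ^ 2 ≤ maxNorm A ^ 2 := by
      intro ω
      rw [← sq_abs (A ω)]
      exact pow_le_pow_left₀ (abs_nonneg _) (abs_le_maxNorm hd A ω) 2
    calc ∑ ω, Z ω ^ 2 = DD ^ 2 * ∑ ω, A ω ^ 2 * Y ω ^ 2 := by
          rw [Finset.mul_sum]; exact Finset.sum_congr rfl fun ω _ => h1 ω
      _ ≤ DD ^ 2 * ∑ ω, maxNorm A ^ 2 * Y ω ^ 2 := by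
          apply mul_le_mul_of_nonneg_left _ (by positivity)
          exact Finset.sum_le_sum fun ω _ =>
            mul_le_mul_of_nonneg_right (h2 ω) (sq_nonneg _)
      _ = DD ^ 2 * maxNorm A ^ 2 * ∑ ω, Y ω ^ 2 := by
          rw [← Finset.mul_sum]; ring
      _ ≤ DD ^ 2 * maxNorm A ^ 2 * 1 :=
          mul_le_mul_of_nonneg_left (Uset.sq_sum_le_one hY) (by positivity)
      _ = v * DD := by rw [hv]; ring
  -- predicate equivalence
  have hm : (∑ ω, Z ω) / (Fintype.card (∀ j, Fin (d j)) : ℝ) = tinner Y A := by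
    rw [hcard, hZ]
    simp only [← Finset.mul_sum]
    rw [tinner]
    field_simp
  have hpred : ∀ s : Fin n → ∀ j, Fin (d j),
      (tinner Y (sampleAvg A n s - A) ≥ t)
        ↔ ((∑ i, Z (s i)) ≥ n * (t + (∑ ω, Z ω) / Fintype.card (∀ j, Fin (d j)))) := by
    intro s
    have hsa : tinner Y (sampleAvg A n s) = (1 / n) * ∑ i, Z (s i) := by
      rw [tinner]
      have h1 : ∀ a, Y a * sampleAvg A n s a
          = (1 / n) * ∑ i, (if a = s i then DD * (Y a * A a) else 0) := by
        intro a
        rw [sampleAvg]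
        rw [Finset.mul_sum, Finset.mul_sum, Finset.mul_sum]
        congr 1
        funext i
        rw [Pentry]
        by_cases h : a = s i <;> simp [h] <;> ring
      rw [Finset.sum_congr rfl fun a _ => h1 a, ← Finset.mul_sum, Finset.sum_comm]
      congr 1
      apply Finset.sum_congr rfl
      intro i _
      rw [Finset.sum_ite_eq' univ (s i) (fun a => DD * (Y a * A a))]
      simp [hZ]
    have hsub : tinner Y (sampleAvg A n s - A) = (1/n) * (∑ i, Z (s i)) - tinner Y A := by
      rw [tinner_sub_right, hsa]
    rw [hsub, hm]
    have hn' : (0:ℝ) < n := by exact_mod_cast hn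
    constructor
    · intro h
      rw [ge_iff_le, le_sub_iff_add_le] at h
      have := mul_le_mul_of_nonneg_left h hn'.le
      calc (n:ℝ) * (t + tinner Y A) ≤ n * (1 / n * ∑ i, Z (s i)) := this
        _ = ∑ i, Z (s i) := by field_simp
    · intro h
      rw [ge_iff_le, le_sub_iff_add_le]
      have := mul_le_mul_of_nonneg_left h (le_of_lt (by positivity : (0:ℝ) < 1/n))
      calc t + tinner Y A = 1/n * (n * (t + tinner Y A)) := by field_simp
        _ ≤ 1/n * ∑ i, Z (s i) := this
  have hbc := bernstein_count n hn Z M v t hM0 hv0 ht hMb hvb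
  calc (((univ : Finset (Fin n → ∀ j, Fin (d j))).filter fun s =>
        tinner Y (sampleAvg A n s - A) ≥ t).card : ℝ)
      = (((univ : Finset (Fin n → ∀ j, Fin (d j))).filter fun s =>
          (∑ i, Z (s i)) ≥ n * (t + (∑ ω, Z ω) / Fintype.card (∀ j, Fin (d j)))).card : ℝ) := by
        have hfeq := Finset.filter_congr (s := (univ : Finset (Fin n → ∀ j, Fin (d j))))
          (fun s _ => hpred s)
        rw [hfeq]
      _ ≤ DD ^ n * (Real.exp (-(n * t ^ 2) / (4 * v)) + Real.exp (-(3 * n * t) / (4 * M))) := by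
        rw [hcard] at hbc ⊢
        exact hbc
      _ = _ := by rw [hv, hM]

end BernApp

section Count2
open Finset
variable {α α' β : Type*} [Fintype α] [Fintype α'] [Fintype β]

lemma count_snd_sum (R : α → β → Prop) [DecidablePred fun w : α × β => R w.1 w.2]
    [∀ b, DecidablePred fun a => R a b] :
    (((univ : Finset (α × β)).filter fun w => R w.1 w.2).card : ℝ)
      = ∑ b, (((univ : Finset α).filter fun a => R a b).card : ℝ) := by
  simp only [card_filter_cast_real]
  rw [Fintype.sum_prod_type, Finset.sum_comm]

lemma count_proj13 (R : α → β → Prop)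
    [DecidablePred fun w : (α × α') × β => R w.1.1 w.2]
    [DecidablePred fun v : α × β => R v.1 v.2] :
    (((univ : Finset ((α × α') × β)).filter fun w => R w.1.1 w.2).card : ℝ)
      = (Fintype.card α' : ℝ) * (((univ : Finset (α × β)).filter fun v => R v.1 v.2).card : ℝ) := by
  have e : {w : (α × α') × β // R w.1.1 w.2} ≃ α' × {v : α × β // R v.1 v.2} :=
    { toFun := fun w => (w.1.1.2, ⟨(w.1.1.1, w.1.2), w.2⟩)
      invFun := fun p => ⟨((p.2.1.1, p.1), p.2.1.2), p.2.2⟩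
      left_inv := fun w => rfl
      right_inv := fun p => rfl }
  have h1 : ((univ : Finset ((α × α') × β)).filter fun w => R w.1.1 w.2).card
      = Fintype.card α' * ((univ : Finset (α × β)).filter fun v => R v.1 v.2).card := by
    rw [← Fintype.card_subtype, ← Fintype.card_subtype, ← Fintype.card_prod]
    exact Fintype.card_congr e
  rw [h1]
  push_cast
  ring

lemma count_proj23 (R : α' → β → Prop)
    [DecidablePred fun w : (α × α') × β => R w.1.2 w.2]
    [DecidablePred fun v : α' × β => R v.1 v.2] :
    (((univ : Finset ((α × α') × β)).filter fun w => R w.1.2 w.2).card : ℝ)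
      = (Fintype.card α : ℝ) * (((univ : Finset (α' × β)).filter fun v => R v.1 v.2).card : ℝ) := by
  have e : {w : (α × α') × β // R w.1.2 w.2} ≃ α × {v : α' × β // R v.1 v.2} :=
    { toFun := fun w => (w.1.1.1, ⟨(w.1.1.2, w.1.2), w.2⟩)
      invFun := fun p => ⟨((p.1, p.2.1.1), p.2.1.2), p.2.2⟩
      left_inv := fun w => rfl
      right_inv := fun p => rfl }
  have h1 : ((univ : Finset ((α × α') × β)).filter fun w => R w.1.2 w.2).card
      = Fintype.card α * ((univ : Finset (α' × β)).filter fun v => R v.1 v.2).card := by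
    rw [← Fintype.card_subtype, ← Fintype.card_subtype, ← Fintype.card_prod]
    exact Fintype.card_congr e
  rw [h1]
  push_cast
  ring

end Count2
set_option maxHeartbeats 1000000 in
/-- symmetrization step in the proof of Theorem 2: over the joint sample
space of the uniform indices `ω_i` and independent Rademacher signs `ε_i`,
`P{‖X̄−A‖_{∘,δ} ≥ 3t}` is controlled by two Bernstein terms plus four times the probability
that the Rademacher average exceeds `t`. -/
theorem statement7 {k : ℕ} (hk : 2 ≤ k) {d : Fin k → ℕ} (hd : ∀ j, 0 < d j)
    (δ : Fin k → ℝ) (hδ : ∀ j, δ j ∈ Set.Ioc (0 : ℝ) 1)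
    (A : Tensor d) (n : ℕ) (hn : 0 < n)
    (dstar δstar δss : ℝ)
    (hdstar : dstar = (∏ j, (d j : ℝ)) ^ ((1 : ℝ) / k))
    (hδstar : δstar = (∏ j, δ j) ^ ((1 : ℝ) / k))
    (hδss : δss = sInf {x | ∃ j1 j2 : Fin k, j1 < j2 ∧ x = Real.sqrt (δ j1 * δ j2)})
    (t : ℝ) (ht : 0 < t) :
    prob (fun w : (Fin n → ∀ j, Fin (d j)) × (Fin n → Bool) =>
        onorm δ (sampleAvg A n w.1 - A) ≥ 3 * t) ≤
      Real.exp (-((n : ℝ) * t ^ 2) / (4 * dstar ^ k * maxNorm A ^ 2))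
      + Real.exp (-((3 / 4) * δss ^ 2 * n * t) / (dstar ^ k * δstar ^ k * maxNorm A))
      + 4 * prob (fun w : (Fin n → ∀ j, Fin (d j)) × (Fin n → Bool) =>
          onorm δ (fun a => (1 / (n : ℝ)) * ∑ i : Fin n,
              (if w.2 i then (1 : ℝ) else -1) * ((∏ j, (d j : ℝ)) * Pentry (w.1 i) A a))
            ≥ t) := by
  classical
  have hI : Nonempty (∀ j, Fin (d j)) := ⟨fun j => ⟨0, hd j⟩⟩
  have hn' : (0:ℝ) < n := by exact_mod_cast hn
  have hDD0 : (0:ℝ) < ∏ j, (d j : ℝ) := Finset.prod_pos fun j _ => by exact_mod_cast hd j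
  have hδprod : (0:ℝ) < ∏ j, δ j := Finset.prod_pos fun j _ => (hδ j).1
  have hk0 : (k:ℝ) ≠ 0 := Nat.cast_ne_zero.mpr (by omega)
  have hdk : dstar ^ k = ∏ j, (d j : ℝ) := by
    rw [hdstar, ← Real.rpow_natCast ((∏ j, (d j : ℝ)) ^ ((1:ℝ)/k)) k,
      ← Real.rpow_mul hDD0.le, one_div, inv_mul_cancel₀ hk0, Real.rpow_one]
  have hδk : δstar ^ k = ∏ j, δ j := by
    rw [hδstar, ← Real.rpow_natCast ((∏ j, δ j) ^ ((1:ℝ)/k)) k,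
      ← Real.rpow_mul hδprod.le, one_div, inv_mul_cancel₀ hk0, Real.rpow_one]
  have hcardI : (Fintype.card (∀ j, Fin (d j)) : ℝ) = ∏ j, (d j : ℝ) := by
    rw [Fintype.card_pi]
    push_cast
    simp
  have hcardIs : (Fintype.card (Fin n → ∀ j, Fin (d j)) : ℝ) = (∏ j, (d j : ℝ)) ^ n := by
    rw [Fintype.card_fun, Fintype.card_fin]
    push_cast
    rw [hcardI]
  have hcardB : (Fintype.card (Fin n → Bool) : ℝ) = 2 ^ n := by
    rw [Fintype.card_fun, Fintype.card_fin, Fintype.card_bool]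
    push_cast
    ring
  have hDn : (0:ℝ) < (∏ j, (d j : ℝ)) ^ n := by positivity
  have h2n : (0:ℝ) < (2:ℝ) ^ n := by positivity
  set e1 : ℝ := Real.exp (-((n : ℝ) * t ^ 2) / (4 * dstar ^ k * maxNorm A ^ 2)) with he1
  set e2 : ℝ := Real.exp (-((3 / 4) * δss ^ 2 * n * t) / (dstar ^ k * δstar ^ k * maxNorm A))
    with he2
  have he1pos : 0 < e1 := Real.exp_pos _
  have he2pos : 0 < e2 := Real.exp_pos _
  -- the Rademacher tensor
  set STf : (Fin n → ∀ j, Fin (d j)) → (Fin n → Bool) → Tensor d := fun s ε =>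
    (fun a => (1 / (n : ℝ)) * ∑ i : Fin n,
      (if ε i then (1 : ℝ) else -1) * ((∏ j, (d j : ℝ)) * Pentry (s i) A a)) with hSTf
  -- counts
  set cB : ℝ := (((Finset.univ : Finset (Fin n → ∀ j, Fin (d j))).filter fun s =>
      onorm δ (sampleAvg A n s - A) ≥ 3 * t).card : ℝ) with hcB
  set cR : ℝ := (((Finset.univ :
      Finset ((Fin n → ∀ j, Fin (d j)) × (Fin n → Bool))).filter fun w =>
      t ≤ onorm δ (STf w.1 w.2)).card : ℝ) with hcR
  have hcB0 : 0 ≤ cB := by rw [hcB]; positivity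
  have hcR0 : 0 ≤ cR := by rw [hcR]; positivity
  have hcBle : cB ≤ (∏ j, (d j : ℝ)) ^ n := by
    rw [hcB, ← hcardIs, ← Finset.card_univ]
    exact_mod_cast Finset.card_filter_le _ _
  -- goal reduction to counts
  have hgoal1 : prob (fun w : (Fin n → ∀ j, Fin (d j)) × (Fin n → Bool) =>
      onorm δ (sampleAvg A n w.1 - A) ≥ 3 * t)
      = cB * 2 ^ n / ((∏ j, (d j : ℝ)) ^ n * 2 ^ n) := by
    rw [prob_eq_card]
    rw [count_fst (fun s : Fin n → ∀ j, Fin (d j) => onorm δ (sampleAvg A n s - A) ≥ 3 * t)]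
    rw [Fintype.card_prod]
    push_cast
    rw [hcardIs, hcardB, hcB]
  have hgoal2 : prob (fun w : (Fin n → ∀ j, Fin (d j)) × (Fin n → Bool) =>
      onorm δ (fun a => (1 / (n : ℝ)) * ∑ i : Fin n,
        (if w.2 i then (1 : ℝ) else -1) * ((∏ j, (d j : ℝ)) * Pentry (w.1 i) A a)) ≥ t)
      = cR / ((∏ j, (d j : ℝ)) ^ n * 2 ^ n) := by
    rw [prob_eq_card]
    have hfc : ((Finset.univ :
        Finset ((Fin n → ∀ j, Fin (d j)) × (Fin n → Bool))).filter fun w =>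
        onorm δ (fun a => (1 / (n : ℝ)) * ∑ i : Fin n,
          (if w.2 i then (1 : ℝ) else -1) * ((∏ j, (d j : ℝ)) * Pentry (w.1 i) A a)) ≥ t)
        = ((Finset.univ :
        Finset ((Fin n → ∀ j, Fin (d j)) × (Fin n → Bool))).filter fun w =>
        t ≤ onorm δ (STf w.1 w.2)) := by
      apply Finset.filter_congr
      intro w _
      simp only [hSTf]
    rw [hfc, ← hcR, Fintype.card_prod]
    push_cast
    rw [hcardIs, hcardB]
  rw [hgoal1, hgoal2]
  have hN : (0:ℝ) < (∏ j, (d j : ℝ)) ^ n * 2 ^ n := by positivity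
  -- main count inequality
  have key : cB * 2 ^ n ≤ (e1 + e2) * ((∏ j, (d j : ℝ)) ^ n * 2 ^ n) + 4 * cR := by
    rcases le_or_gt 1 (e1 + e2) with hc | hc
    · have hb1 : cB * 2 ^ n ≤ (∏ j, (d j : ℝ)) ^ n * 2 ^ n :=
        mul_le_mul_of_nonneg_right hcBle h2n.le
      have hb2 : 1 * ((∏ j, (d j : ℝ)) ^ n * 2 ^ n)
          ≤ (e1 + e2) * ((∏ j, (d j : ℝ)) ^ n * 2 ^ n) :=
        mul_le_mul_of_nonneg_right hc (by positivity)
      linarith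
    · -- e1 + e2 < 1 : the symmetrization argument
      have hA : 0 < maxNorm A := by
        rcases (maxNorm_nonneg hd A).lt_or_eq with h | h
        · exact h
        · exfalso
          have hz : e2 = 1 := by
            rw [he2, ← h, mul_zero, div_zero, Real.exp_zero]
          linarith
      -- Bernstein bound for each fixed Y
      have hBern : ∀ Y ∈ Uset (d := d) δ,
          (((Finset.univ : Finset (Fin n → ∀ j, Fin (d j))).filter fun s =>
            tinner Y (sampleAvg A n s - A) ≥ t).card : ℝ)
            ≤ (e1 + e2) * (∏ j, (d j : ℝ)) ^ n := by
        intro Y hY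
        have h := bernstein_applied hk hd hδ A n hn t ht hA δss hδss hY
        have hE1 : Real.exp (-(n * t ^ 2) / (4 * ((∏ j, (d j : ℝ)) * maxNorm A ^ 2))) = e1 := by
          rw [he1, hdk]
          congr 1
          ring
        have hE2 : Real.exp (-(3 * n * t) /
            (4 * ((∏ j, (d j : ℝ)) * (∏ j, δ j) * maxNorm A / δss ^ 2))) = e2 := by
          rw [he2, hdk, hδk]
          congr 1
          have hss := (dss_facts hk hδ δss hδss).1
          field_simp
        rw [hE1, hE2] at h
        calc (((Finset.univ : Finset (Fin n → ∀ j, Fin (d j))).filter fun s =>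
            tinner Y (sampleAvg A n s - A) ≥ t).card : ℝ)
            ≤ (∏ j, (d j : ℝ)) ^ n * (e1 + e2) := h
          _ = (e1 + e2) * (∏ j, (d j : ℝ)) ^ n := by ring
      -- choice of η
      set V : Finset ℝ := ((Finset.univ :
        Finset ((Fin n → ∀ j, Fin (d j)) × (Fin n → Bool))).image
          fun w => onorm δ (STf w.1 w.2)).filter (fun x => x < t) with hV
      set η : ℝ := if h : V.Nonempty then t - V.max' h else t with hη
      have hη0 : 0 < η := by
        rw [hη]
        split_ifs with h
        · have := (Finset.mem_filter.mp (V.max'_mem h)).2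
          linarith
        · exact ht
      have hηkey : ∀ w : (Fin n → ∀ j, Fin (d j)) × (Fin n → Bool),
          t - η / 2 < onorm δ (STf w.1 w.2) → t ≤ onorm δ (STf w.1 w.2) := by
        intro w hw
        by_contra hlt
        push_neg at hlt
        have hmem : onorm δ (STf w.1 w.2) ∈ V := by
          rw [hV]
          exact Finset.mem_filter.mpr ⟨Finset.mem_image_of_mem _ (Finset.mem_univ w), hlt⟩
        have hVne : V.Nonempty := ⟨_, hmem⟩
        have hle : onorm δ (STf w.1 w.2) ≤ V.max' hVne := Finset.le_max' _ _ hmem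
        rw [hη] at hw hη0
        rw [dif_pos hVne] at hw hη0
        linarith
      -- selection of near-optimal Y
      have hsel : ∀ s : Fin n → ∀ j, Fin (d j), ∃ Y : Tensor d, Y ∈ Uset (d := d) δ ∧
          (3 * t ≤ onorm δ (sampleAvg A n s - A) →
            3 * t - η < tinner Y (sampleAvg A n s - A)) := by
        intro s
        by_cases hb : 3 * t ≤ onorm δ (sampleAvg A n s - A)
        · have hlt : 3 * t - η < onorm δ (sampleAvg A n s - A) := by linarith
          obtain ⟨Y, hY, hgt⟩ := exists_gt_of_lt_onorm hk hδ hlt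
          exact ⟨Y, hY, fun _ => hgt⟩
        · exact ⟨0, Uset.zero_mem hk hδ, fun h => absurd h hb⟩
      choose Ysel hYU hYgt using hsel
      -- Step C : pair count
      set cP : ℝ := (((Finset.univ :
          Finset ((Fin n → ∀ j, Fin (d j)) × (Fin n → ∀ j, Fin (d j)))).filter fun p =>
          2 * t - η < onorm δ ((sampleAvg A n p.1 - A) - (sampleAvg A n p.2 - A))).card : ℝ)
        with hcP
      have hstepC : (1 - (e1 + e2)) * (cB * (∏ j, (d j : ℝ)) ^ n) ≤ cP := by
        have hG : (((Finset.univ :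
            Finset ((Fin n → ∀ j, Fin (d j)) × (Fin n → ∀ j, Fin (d j)))).filter fun p =>
            (onorm δ (sampleAvg A n p.1 - A) ≥ 3 * t) ∧
              tinner (Ysel p.1) (sampleAvg A n p.2 - A) < t).card : ℝ)
            = ∑ s ∈ (Finset.univ : Finset (Fin n → ∀ j, Fin (d j))).filter
                (fun s => onorm δ (sampleAvg A n s - A) ≥ 3 * t),
              (((Finset.univ : Finset (Fin n → ∀ j, Fin (d j))).filter fun s' =>
                tinner (Ysel s) (sampleAvg A n s' - A) < t).card : ℝ) :=
          count_pair_sum (fun s => onorm δ (sampleAvg A n s - A) ≥ 3 * t) (fun s s' => tinner (Ysel s) (sampleAvg A n s' - A) < t)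
        have hinner : ∀ s : Fin n → ∀ j, Fin (d j),
            (1 - (e1 + e2)) * (∏ j, (d j : ℝ)) ^ n
              ≤ (((Finset.univ : Finset (Fin n → ∀ j, Fin (d j))).filter fun s' =>
                tinner (Ysel s) (sampleAvg A n s' - A) < t).card : ℝ) := by
          intro s
          have hsplit := Finset.card_filter_add_card_filter_not
            (s := (Finset.univ : Finset (Fin n → ∀ j, Fin (d j))))
            (p := fun s' => tinner (Ysel s) (sampleAvg A n s' - A) ≥ t)
          have hcongr : ((Finset.univ : Finset (Fin n → ∀ j, Fin (d j))).filter
              fun s' => ¬(tinner (Ysel s) (sampleAvg A n s' - A) ≥ t))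
              = ((Finset.univ : Finset (Fin n → ∀ j, Fin (d j))).filter
              fun s' => tinner (Ysel s) (sampleAvg A n s' - A) < t) :=
            Finset.filter_congr fun s' _ => by simp [not_le]
          have hb := hBern (Ysel s) (hYU s)
          have hcards : ((Finset.univ : Finset (Fin n → ∀ j, Fin (d j))).card : ℝ)
              = (∏ j, (d j : ℝ)) ^ n := by
            rw [Finset.card_univ, hcardIs]
          rw [hcongr] at hsplit
          have := congrArg (fun x : ℕ => (x:ℝ)) hsplit
          push_cast at this
          rw [hcards] at this
          linarith
        have hGc : cB * ((1 - (e1 + e2)) * (∏ j, (d j : ℝ)) ^ n)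
            ≤ (((Finset.univ :
            Finset ((Fin n → ∀ j, Fin (d j)) × (Fin n → ∀ j, Fin (d j)))).filter fun p =>
            (onorm δ (sampleAvg A n p.1 - A) ≥ 3 * t) ∧
              tinner (Ysel p.1) (sampleAvg A n p.2 - A) < t).card : ℝ) := by
          rw [hG, hcB]
          calc (((Finset.univ : Finset (Fin n → ∀ j, Fin (d j))).filter fun s =>
              onorm δ (sampleAvg A n s - A) ≥ 3 * t).card : ℝ)
                * ((1 - (e1 + e2)) * (∏ j, (d j : ℝ)) ^ n)
              = ∑ _s ∈ (Finset.univ : Finset (Fin n → ∀ j, Fin (d j))).filter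
                  (fun s => onorm δ (sampleAvg A n s - A) ≥ 3 * t),
                  (1 - (e1 + e2)) * (∏ j, (d j : ℝ)) ^ n := by
                rw [Finset.sum_const, nsmul_eq_mul]
            _ ≤ _ := Finset.sum_le_sum fun s _ => hinner s
        have hsub : (((Finset.univ :
            Finset ((Fin n → ∀ j, Fin (d j)) × (Fin n → ∀ j, Fin (d j)))).filter fun p =>
            (onorm δ (sampleAvg A n p.1 - A) ≥ 3 * t) ∧
              tinner (Ysel p.1) (sampleAvg A n p.2 - A) < t).card : ℝ) ≤ cP := by
          rw [hcP]
          have hmono : ∀ p : (Fin n → ∀ j, Fin (d j)) × (Fin n → ∀ j, Fin (d j)),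
              ((onorm δ (sampleAvg A n p.1 - A) ≥ 3 * t) ∧
                tinner (Ysel p.1) (sampleAvg A n p.2 - A) < t) →
              2 * t - η < onorm δ ((sampleAvg A n p.1 - A) - (sampleAvg A n p.2 - A)) := by
            rintro p ⟨h1, h2⟩
            have h3 := hYgt p.1 h1
            have h4 : tinner (Ysel p.1) ((sampleAvg A n p.1 - A) - (sampleAvg A n p.2 - A))
                = tinner (Ysel p.1) (sampleAvg A n p.1 - A)
                  - tinner (Ysel p.1) (sampleAvg A n p.2 - A) := tinner_sub_right _ _ _
            have h5 := le_onorm hk hδ (X := (sampleAvg A n p.1 - A) - (sampleAvg A n p.2 - A))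
              (hYU p.1)
            linarith
          exact_mod_cast Finset.card_le_card (fun p hp => by
            rw [Finset.mem_filter] at hp ⊢
            exact ⟨hp.1, hmono p hp.2⟩)
        calc (1 - (e1 + e2)) * (cB * (∏ j, (d j : ℝ)) ^ n)
            = cB * ((1 - (e1 + e2)) * (∏ j, (d j : ℝ)) ^ n) := by ring
          _ ≤ _ := hGc
          _ ≤ cP := hsub
      -- Step D : sign-flip bijection
      have hstepD : ∀ ε : Fin n → Bool,
          (((Finset.univ :
            Finset ((Fin n → ∀ j, Fin (d j)) × (Fin n → ∀ j, Fin (d j)))).filter fun p =>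
            2 * t - η < onorm δ (STf p.1 ε - STf p.2 ε)).card : ℝ) = cP := by
        intro ε
        rw [hcP]
        set φ : ((Fin n → ∀ j, Fin (d j)) × (Fin n → ∀ j, Fin (d j))) →
            ((Fin n → ∀ j, Fin (d j)) × (Fin n → ∀ j, Fin (d j))) := fun p =>
          (fun i => if ε i then p.1 i else p.2 i,
           fun i => if ε i then p.2 i else p.1 i) with hφ
        have hφinv : ∀ p, φ (φ p) = p := by
          intro p
          simp only [hφ]
          refine Prod.ext ?_ ?_ <;>
            · funext i
              by_cases hi : ε i <;> simp [hi]
        have hid : ∀ s s' : Fin n → ∀ j, Fin (d j),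
            STf (fun i => if ε i then s i else s' i) ε
              - STf (fun i => if ε i then s' i else s i) ε
            = (sampleAvg A n s - A) - (sampleAvg A n s' - A) := by
          intro s s'
          funext a
          show STf (fun i => if ε i then s i else s' i) ε a
              - STf (fun i => if ε i then s' i else s i) ε a
            = (sampleAvg A n s a - A a) - (sampleAvg A n s' a - A a)
          simp only [hSTf, sampleAvg]
          have hterm : ∀ i : Fin n,
              (if ε i then (1:ℝ) else -1) *
                  ((∏ j, (d j : ℝ)) * Pentry ((fun i => if ε i then s i else s' i) i) A a)
                - (if ε i then (1:ℝ) else -1) *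
                  ((∏ j, (d j : ℝ)) * Pentry ((fun i => if ε i then s' i else s i) i) A a)
              = (∏ j, (d j : ℝ)) * Pentry (s i) A a
                - (∏ j, (d j : ℝ)) * Pentry (s' i) A a := by
            intro i
            by_cases hi : ε i <;> simp [hi] <;> ring
          calc (1 / (n:ℝ)) * ∑ i : Fin n, (if ε i then (1:ℝ) else -1) *
                  ((∏ j, (d j : ℝ)) * Pentry ((fun i => if ε i then s i else s' i) i) A a)
              - (1 / (n:ℝ)) * ∑ i : Fin n, (if ε i then (1:ℝ) else -1) *
                  ((∏ j, (d j : ℝ)) * Pentry ((fun i => if ε i then s' i else s i) i) A a)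
              = (1 / (n:ℝ)) * ∑ i : Fin n,
                  ((if ε i then (1:ℝ) else -1) *
                    ((∏ j, (d j : ℝ)) * Pentry ((fun i => if ε i then s i else s' i) i) A a)
                  - (if ε i then (1:ℝ) else -1) *
                    ((∏ j, (d j : ℝ)) * Pentry ((fun i => if ε i then s' i else s i) i) A a)) := by
                rw [← mul_sub, ← Finset.sum_sub_distrib]
            _ = (1 / (n:ℝ)) * ∑ i : Fin n, ((∏ j, (d j : ℝ)) * Pentry (s i) A a
                  - (∏ j, (d j : ℝ)) * Pentry (s' i) A a) := by
                rw [Finset.sum_congr rfl fun i _ => hterm i]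
            _ = ((1 / (n:ℝ)) * ∑ i : Fin n, (∏ j, (d j : ℝ)) * Pentry (s i) A a - A a)
                - ((1 / (n:ℝ)) * ∑ i : Fin n, (∏ j, (d j : ℝ)) * Pentry (s' i) A a - A a) := by
                rw [Finset.sum_sub_distrib, mul_sub]
                ring
        have hpred : ∀ p : (Fin n → ∀ j, Fin (d j)) × (Fin n → ∀ j, Fin (d j)),
            (2 * t - η < onorm δ (STf p.1 ε - STf p.2 ε)) ↔
            (2 * t - η < onorm δ
              ((sampleAvg A n (φ p).1 - A) - (sampleAvg A n (φ p).2 - A))) := by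
          intro p
          have h1 := hid (φ p).1 (φ p).2
          have hm1 : (fun i => if ε i then (φ p).1 i else (φ p).2 i) = p.1 := by
            funext i
            simp only [hφ]
            by_cases hi : ε i <;> simp [hi]
          have hm2 : (fun i => if ε i then (φ p).2 i else (φ p).1 i) = p.2 := by
            funext i
            simp only [hφ]
            by_cases hi : ε i <;> simp [hi]
          rw [hm1, hm2] at h1
          rw [h1]
        congr 1
        apply Finset.card_nbij' φ φ
        · intro p hp
          rw [Finset.mem_coe, Finset.mem_filter] at hp ⊢
          exact ⟨Finset.mem_univ _, (hpred p).mp hp.2⟩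
        · intro p hp
          rw [Finset.mem_coe, Finset.mem_filter] at hp ⊢
          refine ⟨Finset.mem_univ _, ?_⟩
          have h2 := hpred (φ p)
          rw [hφinv p] at h2
          exact h2.mpr hp.2
        · intro p _
          exact hφinv p
        · intro p _
          exact hφinv p
      -- Step D2 : sum over sign patterns
      set cPT : ℝ := (((Finset.univ :
          Finset (((Fin n → ∀ j, Fin (d j)) × (Fin n → ∀ j, Fin (d j)))
            × (Fin n → Bool))).filter fun w =>
          2 * t - η < onorm δ (STf w.1.1 w.2 - STf w.1.2 w.2)).card : ℝ) with hcPT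
      have hD2 : cPT = 2 ^ n * cP := by
        rw [hcPT, count_snd_sum
          (fun (p : (Fin n → ∀ j, Fin (d j)) × (Fin n → ∀ j, Fin (d j)))
            (ε : Fin n → Bool) => 2 * t - η < onorm δ (STf p.1 ε - STf p.2 ε)),
          Finset.sum_congr rfl (fun ε _ => hstepD ε), Finset.sum_const, nsmul_eq_mul,
          Finset.card_univ]
        rw [hcardB]
      -- Step E : union bound
      set cR' : ℝ := (((Finset.univ :
          Finset ((Fin n → ∀ j, Fin (d j)) × (Fin n → Bool))).filter fun v =>
          t - η / 2 < onorm δ (STf v.1 v.2)).card : ℝ) with hcR'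
      have hE : cPT ≤ 2 * ((∏ j, (d j : ℝ)) ^ n * cR') := by
        have hsub1 : cPT ≤ (((Finset.univ :
            Finset (((Fin n → ∀ j, Fin (d j)) × (Fin n → ∀ j, Fin (d j)))
              × (Fin n → Bool))).filter fun w =>
            (t - η / 2 < onorm δ (STf w.1.1 w.2)) ∨
              (t - η / 2 < onorm δ (STf w.1.2 w.2))).card : ℝ) := by
          rw [hcPT]
          have hmono : ∀ w : ((Fin n → ∀ j, Fin (d j)) × (Fin n → ∀ j, Fin (d j)))
              × (Fin n → Bool),
              2 * t - η < onorm δ (STf w.1.1 w.2 - STf w.1.2 w.2) →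
              (t - η / 2 < onorm δ (STf w.1.1 w.2)) ∨
                (t - η / 2 < onorm δ (STf w.1.2 w.2)) := by
            intro w hw
            by_contra hcon
            push_neg at hcon
            have h3 := onorm_sub_le hk hδ (STf w.1.1 w.2) (STf w.1.2 w.2)
            linarith [hcon.1, hcon.2]
          exact_mod_cast Finset.card_le_card (fun w hw => by
            rw [Finset.mem_filter] at hw ⊢
            exact ⟨hw.1, hmono w hw.2⟩)
        have hor : (((Finset.univ :
            Finset (((Fin n → ∀ j, Fin (d j)) × (Fin n → ∀ j, Fin (d j)))
              × (Fin n → Bool))).filter fun w =>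
            (t - η / 2 < onorm δ (STf w.1.1 w.2)) ∨
              (t - η / 2 < onorm δ (STf w.1.2 w.2))).card : ℝ)
            ≤ (((Finset.univ :
            Finset (((Fin n → ∀ j, Fin (d j)) × (Fin n → ∀ j, Fin (d j)))
              × (Fin n → Bool))).filter fun w =>
            t - η / 2 < onorm δ (STf w.1.1 w.2)).card : ℝ)
            + (((Finset.univ :
            Finset (((Fin n → ∀ j, Fin (d j)) × (Fin n → ∀ j, Fin (d j)))
              × (Fin n → Bool))).filter fun w =>
            t - η / 2 < onorm δ (STf w.1.2 w.2)).card : ℝ) := by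
          rw [Finset.filter_or]
          exact_mod_cast Finset.card_union_le _ _
        have hp13 := count_proj13
          (α := Fin n → ∀ j, Fin (d j)) (α' := Fin n → ∀ j, Fin (d j)) (β := Fin n → Bool)
          (fun s ε => t - η / 2 < onorm δ (STf s ε))
        have hp23 := count_proj23
          (α := Fin n → ∀ j, Fin (d j)) (α' := Fin n → ∀ j, Fin (d j)) (β := Fin n → Bool)
          (fun s ε => t - η / 2 < onorm δ (STf s ε))
        rw [hcardIs] at hp13 hp23
        calc cPT ≤ _ := hsub1
          _ ≤ _ := hor
          _ = (∏ j, (d j : ℝ)) ^ n * cR' + (∏ j, (d j : ℝ)) ^ n * cR' := by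
              rw [hp13, hp23, hcR']
          _ = 2 * ((∏ j, (d j : ℝ)) ^ n * cR') := by ring
      -- Step F : η threshold
      have hF : cR' ≤ cR := by
        rw [hcR', hcR]
        have hmono : ∀ v : (Fin n → ∀ j, Fin (d j)) × (Fin n → Bool),
            t - η / 2 < onorm δ (STf v.1 v.2) → t ≤ onorm δ (STf v.1 v.2) := fun v hv =>
          hηkey v hv
        exact_mod_cast Finset.card_le_card (fun v hv => by
          rw [Finset.mem_filter] at hv ⊢
          exact ⟨hv.1, hmono v hv.2⟩)
      -- combine everything
      have hchain : (1 - (e1 + e2)) * (cB * (∏ j, (d j : ℝ)) ^ n) * 2 ^ n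
          ≤ 2 * ((∏ j, (d j : ℝ)) ^ n * cR) := by
        calc (1 - (e1 + e2)) * (cB * (∏ j, (d j : ℝ)) ^ n) * 2 ^ n
            ≤ cP * 2 ^ n := mul_le_mul_of_nonneg_right hstepC h2n.le
          _ = cPT := by rw [hD2]; ring
          _ ≤ 2 * ((∏ j, (d j : ℝ)) ^ n * cR') := hE
          _ ≤ 2 * ((∏ j, (d j : ℝ)) ^ n * cR) := by nlinarith
      have hred : (1 - (e1 + e2)) * (cB * 2 ^ n) ≤ 2 * cR := by
        have h5 : ((1 - (e1 + e2)) * (cB * 2 ^ n)) * (∏ j, (d j : ℝ)) ^ n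
            ≤ (2 * cR) * (∏ j, (d j : ℝ)) ^ n := by
          calc ((1 - (e1 + e2)) * (cB * 2 ^ n)) * (∏ j, (d j : ℝ)) ^ n
              = (1 - (e1 + e2)) * (cB * (∏ j, (d j : ℝ)) ^ n) * 2 ^ n := by ring
            _ ≤ 2 * ((∏ j, (d j : ℝ)) ^ n * cR) := hchain
            _ = (2 * cR) * (∏ j, (d j : ℝ)) ^ n := by ring
        exact le_of_mul_le_mul_right h5 hDn
      have hb1 : (e1 + e2) * (cB * 2 ^ n) ≤ (e1 + e2) * ((∏ j, (d j : ℝ)) ^ n * 2 ^ n) := by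
        apply mul_le_mul_of_nonneg_left _ (by positivity)
        exact mul_le_mul_of_nonneg_right hcBle h2n.le
      linarith
  calc cB * 2 ^ n / ((∏ j, (d j : ℝ)) ^ n * 2 ^ n)
      ≤ ((e1 + e2) * ((∏ j, (d j : ℝ)) ^ n * 2 ^ n) + 4 * cR)
          / ((∏ j, (d j : ℝ)) ^ n * 2 ^ n) := by
        exact (div_le_div_iff_of_pos_right hN).mpr key
    _ = e1 + e2 + 4 * (cR / ((∏ j, (d j : ℝ)) ^ n * 2 ^ n)) := by
        field_simp

end IncoherentTensor
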